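/- Let p be a prime, K a p-adic field, and D a central division algebra over K of prime degree ℓ, i.e., a division ring with center K and dim_K D = ℓ². Regard D as a Lie algebra over K via ⁅a,b⁆ = ab − ba. Then the derived Lie subalgebra ⁅D,D⁆ is a CA Lie algebra over K. -/

import Mathlib

/-- A Lie ring (in particular, a Lie algebra) is CA if the centralizer of
every nonzero element is abelian. -/
def IsCA (L : Type*) [LieRing L] : Prop :=
  ∀ x : L, x ≠ 0 → ∀ y z : L, ⁅x, y⁆ = 0 → ⁅x, z⁆ = 0 → ⁅y, z⁆ = 0

attribute [local instance 100] LieRing.ofAssociativeRing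

/-- In a division algebra of prime degree `ℓ` over a field (with center equal to the base
field), the subalgebra generated by a pairwise-commuting set containing a noncentral element
has dimension exactly `ℓ`. -/
lemma finrank_adjoin_comm_eq_prime {K D : Type*} [Field K] [DivisionRing D] [Algebra K D]
    [FiniteDimensional K D] {ℓ : ℕ} (hℓ : ℓ.Prime)
    (hdim : Module.finrank K D = ℓ ^ 2) {s : Set D}
    (hs : ∀ a ∈ s, ∀ b ∈ s, a * b = b * a) {x : D} (hxs : x ∈ s)
    (hxc : x ∉ Subalgebra.center K D) :
    Module.finrank K (Algebra.adjoin K s) = ℓ := by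
  haveI : IsDomain (Algebra.adjoin K s) := inferInstance
  letI : CommRing (Algebra.adjoin K s) := Algebra.adjoinCommRingOfComm K hs
  letI : Field (Algebra.adjoin K s) := fieldOfFiniteDimensional K _
  have tower : Module.finrank K (Algebra.adjoin K s) *
      Module.finrank (Algebra.adjoin K s) D = ℓ ^ 2 := by
    rw [Module.finrank_mul_finrank, hdim]
  have hdvd : Module.finrank K (Algebra.adjoin K s) ∣ ℓ ^ 2 := ⟨_, tower.symm⟩
  obtain ⟨i, hi2, hi⟩ := (Nat.dvd_prime_pow hℓ).1 hdvd
  have hxE : x ∈ Algebra.adjoin K s := Algebra.subset_adjoin hxs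
  interval_cases i
  · -- dimension 1 : x would be central
    exfalso
    rw [pow_zero] at hi
    have hbot : Algebra.adjoin K s = ⊥ := Subalgebra.finrank_eq_one_iff.1 hi
    rw [hbot, Algebra.mem_bot] at hxE
    obtain ⟨c, rfl⟩ := hxE
    exact hxc (Subalgebra.mem_center_iff.2 fun b => (Algebra.commutes c b).symm)
  · simpa using hi
  · -- dimension ℓ² : the whole algebra would be commutative, x central
    exfalso
    have htop : Subalgebra.toSubmodule (Algebra.adjoin K s) = ⊤ :=
      Submodule.eq_top_of_finrank_eq
        (show Module.finrank K (Subalgebra.toSubmodule (Algebra.adjoin K s)) = Module.finrank K D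
          from by rw [hdim, ← hi]; rfl)
    have hall : ∀ b : D, b ∈ Algebra.adjoin K s := by
      intro b
      have : b ∈ Subalgebra.toSubmodule (Algebra.adjoin K s) := htop ▸ Submodule.mem_top
      exact this
    apply hxc
    refine Subalgebra.mem_center_iff.2 fun b => ?_
    have := mul_comm (⟨b, hall b⟩ : Algebra.adjoin K s) ⟨x, hxE⟩
    exact congrArg Subtype.val this

theorem derived_subalgebra_of_prime_degree_division_algebra_isCA
    (p : ℕ) [Fact p.Prime] (K : Type*) [Field K] [Algebra ℚ_[p] K]
    [FiniteDimensional ℚ_[p] K]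
    (D : Type*) [DivisionRing D] [Algebra K D]
    (hcentral : Subalgebra.center K D = ⊥)
    (ℓ : ℕ) (hℓ : ℓ.Prime) (hdim : Module.finrank K D = ℓ ^ 2) :
    IsCA (LieAlgebra.derivedSeries K D 1) := by
  haveI : CharZero K := charZero_of_injective_algebraMap (algebraMap ℚ_[p] K).injective
  haveI : FiniteDimensional K D := FiniteDimensional.of_finrank_pos
    (by rw [hdim]; exact pow_pos hℓ.pos 2)
  intro x hx y z hxy hxz
  -- the trace of left multiplication
  set τ : D →ₗ[K] K := (LinearMap.trace K D) ∘ₗ (Algebra.lmul K D).toLinearMap with hτdef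
  have hτcomm : ∀ a b : D, τ ⁅a, b⁆ = 0 := by
    intro a b
    simp only [hτdef, LinearMap.comp_apply, Ring.lie_def, map_sub, AlgHom.toLinearMap_apply,
      map_mul]
    rw [LinearMap.trace_mul_comm]
    ring
  have hker : ∀ w : D, w ∈ LieAlgebra.derivedSeries K D 1 → τ w = 0 := by
    intro w hw
    have h1 : LieAlgebra.derivedSeries K D 1 = ⁅(⊤ : LieIdeal K D), (⊤ : LieIdeal K D)⁆ := by
      rw [LieAlgebra.derivedSeries_def, LieAlgebra.derivedSeriesOfIdeal_succ,
        LieAlgebra.derivedSeriesOfIdeal_zero]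
    have hw0 : w ∈ ⁅(⊤ : LieIdeal K D), (⊤ : LieIdeal K D)⁆ := h1 ▸ hw
    have hw' : w ∈ Submodule.span K {m : D | ∃ x ∈ (⊤ : LieIdeal K D), ∃ n ∈ (⊤ : LieIdeal K D),
        ⁅x, n⁆ = m} := by
      rw [← LieSubmodule.lieIdeal_oper_eq_linear_span']
      exact hw0
    have hle : Submodule.span K {m : D | ∃ x ∈ (⊤ : LieIdeal K D), ∃ n ∈ (⊤ : LieIdeal K D),
        ⁅x, n⁆ = m} ≤ LinearMap.ker τ := by
      rw [Submodule.span_le]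
      rintro _ ⟨a, -, b, -, rfl⟩
      exact hτcomm a b
    exact hle hw'
  -- x is not central
  have hxc : (x : D) ∉ Subalgebra.center K D := by
    intro hc
    rw [hcentral, Algebra.mem_bot] at hc
    obtain ⟨c, hcx⟩ := hc
    have h0 : τ (x : D) = 0 := hker _ x.2
    rw [← hcx] at h0
    have h1 : τ (algebraMap K D c) = c * (Module.finrank K D : K) := by
      simp only [hτdef, LinearMap.comp_apply, AlgHom.toLinearMap_apply, AlgHom.commutes,
        Module.algebraMap_end_eq_smul_id, map_smul, LinearMap.trace_id, smul_eq_mul]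
    rw [h1, hdim] at h0
    have hc0 : c = 0 := by
      have hℓ0 : ((ℓ : K) ^ 2 : K) ≠ 0 := by
        exact_mod_cast pow_ne_zero 2 (Nat.cast_ne_zero.2 hℓ.pos.ne')
      have : c * ((ℓ : K) ^ 2) = 0 := by exact_mod_cast h0
      exact (mul_eq_zero.1 this).resolve_right hℓ0
    apply hx
    apply Subtype.ext
    rw [← hcx, hc0, map_zero]
    rfl
  -- commuting hypotheses in D
  have hxy' : (x : D) * y = (y : D) * x := by
    have h : ⁅(x : D), (y : D)⁆ = 0 := by
      have := congrArg Subtype.val hxy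
      simpa using this
    rw [Ring.lie_def] at h
    exact sub_eq_zero.1 h
  have hxz' : (x : D) * z = (z : D) * x := by
    have h : ⁅(x : D), (z : D)⁆ = 0 := by
      have := congrArg Subtype.val hxz
      simpa using this
    rw [Ring.lie_def] at h
    exact sub_eq_zero.1 h
  -- the subalgebras generated
  have hcomm1 : ∀ a ∈ ({(x : D)} : Set D), ∀ b ∈ ({(x : D)} : Set D), a * b = b * a := by
    rintro a rfl b rfl; rfl
  have hcomm2 : ∀ a ∈ ({(x : D), (y : D)} : Set D), ∀ b ∈ ({(x : D), (y : D)} : Set D),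
      a * b = b * a := by
    rintro a (rfl | rfl) b (rfl | rfl) <;> first | rfl | exact hxy' | exact hxy'.symm
  have hcomm3 : ∀ a ∈ ({(x : D), (z : D)} : Set D), ∀ b ∈ ({(x : D), (z : D)} : Set D),
      a * b = b * a := by
    rintro a (rfl | rfl) b (rfl | rfl) <;> first | rfl | exact hxz' | exact hxz'.symm
  have h1 : Module.finrank K (Algebra.adjoin K ({(x : D)} : Set D)) = ℓ :=
    finrank_adjoin_comm_eq_prime hℓ hdim hcomm1 (Set.mem_singleton _) hxc
  have h2 : Module.finrank K (Algebra.adjoin K ({(x : D), (y : D)} : Set D)) = ℓ :=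
    finrank_adjoin_comm_eq_prime hℓ hdim hcomm2 (Set.mem_insert _ _) hxc
  have h3 : Module.finrank K (Algebra.adjoin K ({(x : D), (z : D)} : Set D)) = ℓ :=
    finrank_adjoin_comm_eq_prime hℓ hdim hcomm3 (Set.mem_insert _ _) hxc
  have hle2 : Algebra.adjoin K ({(x : D)} : Set D) ≤
      Algebra.adjoin K ({(x : D), (y : D)} : Set D) :=
    Algebra.adjoin_mono (by simp)
  have hle3 : Algebra.adjoin K ({(x : D)} : Set D) ≤
      Algebra.adjoin K ({(x : D), (z : D)} : Set D) :=
    Algebra.adjoin_mono (by simp)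
  have heq2 : Algebra.adjoin K ({(x : D)} : Set D) =
      Algebra.adjoin K ({(x : D), (y : D)} : Set D) :=
    Subalgebra.toSubmodule_injective
      (Submodule.eq_of_le_of_finrank_eq hle2 (by rw [show Module.finrank K
        (Subalgebra.toSubmodule (Algebra.adjoin K ({(x : D)} : Set D))) = ℓ from h1,
        show Module.finrank K (Subalgebra.toSubmodule
        (Algebra.adjoin K ({(x : D), (y : D)} : Set D))) = ℓ from h2]))
  have heq3 : Algebra.adjoin K ({(x : D)} : Set D) =
      Algebra.adjoin K ({(x : D), (z : D)} : Set D) :=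
    Subalgebra.toSubmodule_injective
      (Submodule.eq_of_le_of_finrank_eq hle3 (by rw [show Module.finrank K
        (Subalgebra.toSubmodule (Algebra.adjoin K ({(x : D)} : Set D))) = ℓ from h1,
        show Module.finrank K (Subalgebra.toSubmodule
        (Algebra.adjoin K ({(x : D), (z : D)} : Set D))) = ℓ from h3]))
  have hy : (y : D) ∈ Algebra.adjoin K ({(x : D)} : Set D) := by
    rw [heq2]; exact Algebra.subset_adjoin (by simp)
  have hz : (z : D) ∈ Algebra.adjoin K ({(x : D)} : Set D) := by
    rw [heq3]; exact Algebra.subset_adjoin (by simp)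
  -- conclude
  have hyz : (y : D) * z = (z : D) * y := by
    letI : CommRing (Algebra.adjoin K ({(x : D)} : Set D)) :=
      Algebra.adjoinCommRingOfComm K hcomm1
    exact congrArg Subtype.val
      (mul_comm (⟨(y : D), hy⟩ : Algebra.adjoin K ({(x : D)} : Set D)) ⟨(z : D), hz⟩)
  apply Subtype.ext
  have h : ⁅(y : D), (z : D)⁆ = 0 := by rw [Ring.lie_def, hyz, sub_self]
  simpa using h
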